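/- Let A = aaᵀ + λ'(1 − 1/r)e₁e₁ᵀ with a = (1/√r, 1, …, 1)ᵀ ∈ ℝ^M, M ≥ 2, r > 1, λ' > 0. Every nonzero eigenvalue q of A satisfies r q² − ((M−1)r + (r−1)λ' + 1) q + λ'(M−1)(r−1) = 0, and each corresponding eigenvector has the form (x, y, …, y)ᵀ with x/√r + (M−1)y = q y and x/r + (M−1)y/√r + λ'(1 − 1/r)x = q x. -/

import Mathlib

open Matrix

/-- Any nonzero eigenvalue `q` of `A = aaᵀ + λ'(1 − 1/r)e₁e₁ᵀ`, `a = (1/√r,1,…,1)ᵀ`,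
satisfies `rq² − ((M−1)r + (r−1)λ' + 1)q + λ'(M−1)(r−1) = 0`, and each corresponding
eigenvector has the form `(x, y, …, y)ᵀ` with
`x/√r + (M−1)y = qy` and `x/r + (M−1)y/√r + λ'(1 − 1/r)x = qx`. -/
theorem stmt19 (M : ℕ) (hM : 2 ≤ M) (r lam : ℝ) (hr : 1 < r) (hlam : 0 < lam)
    (u : Fin M → ℝ) (q : ℝ) (hq : q ≠ 0) (hu : u ≠ 0)
    (heig :
      (vecMulVec (fun i : Fin M => if (i : ℕ) = 0 then (Real.sqrt r)⁻¹ else 1)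
          (fun i : Fin M => if (i : ℕ) = 0 then (Real.sqrt r)⁻¹ else 1) +
        (lam * (1 - 1 / r)) •
          Matrix.of fun i j : Fin M =>
            if (i : ℕ) = 0 ∧ (j : ℕ) = 0 then (1 : ℝ) else 0).mulVec u = q • u) :
    (r * q ^ 2 - (((M : ℝ) - 1) * r + (r - 1) * lam + 1) * q +
        lam * ((M : ℝ) - 1) * (r - 1) = 0) ∧
    ∃ x y : ℝ, u ⟨0, by omega⟩ = x ∧ (∀ i : Fin M, (i : ℕ) ≠ 0 → u i = y) ∧
      x / Real.sqrt r + ((M : ℝ) - 1) * y = q * y ∧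
      x / r + ((M : ℝ) - 1) * y / Real.sqrt r + lam * (1 - 1 / r) * x = q * x := by
  have hr0 : (0:ℝ) < r := lt_trans one_pos hr
  have hrne : r ≠ 0 := ne_of_gt hr0
  set t : ℝ := Real.sqrt r with htdef
  have ht2 : t ^ 2 = r := Real.sq_sqrt hr0.le
  have ht0 : 0 < t := Real.sqrt_pos.mpr hr0
  have htne : t ≠ 0 := ne_of_gt ht0
  set z : Fin M := ⟨0, by omega⟩ with hz
  set a : Fin M → ℝ := fun i => if (i : ℕ) = 0 then t⁻¹ else 1 with ha
  set s : ℝ := ∑ j, a j * u j with hs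
  have hrow : ∀ i : Fin M, a i * s + (if (i:ℕ) = 0 then lam * (1 - 1/r) * u z else 0) = q * u i := by
    intro i
    have h := congrFun heig i
    simp only [mulVec, dotProduct, vecMulVec, Matrix.add_apply, Matrix.smul_apply, of_apply, Pi.smul_apply,
      smul_eq_mul] at h
    rw [← h, hs, Finset.mul_sum]
    have expand : ∑ x : Fin M, (a i * a x + lam * (1 - 1 / r) * if (i:ℕ) = 0 ∧ (x:ℕ) = 0 then (1:ℝ) else 0) * u x
        = (∑ x, a i * (a x * u x)) + ∑ x : Fin M, lam*(1-1/r) * ((if (i:ℕ) = 0 ∧ (x:ℕ) = 0 then (1:ℝ) else 0) * u x) := by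
      rw [← Finset.sum_add_distrib]; apply Finset.sum_congr rfl; intros; ring
    rw [expand]
    congr 1
    rcases eq_or_ne (i:ℕ) 0 with hi | hi
    · simp only [hi, if_true, true_and]
      rw [Finset.sum_eq_single z]
      · simp [hz]
      · intro b _ hb
        have : (b:ℕ) ≠ 0 := fun hb0 => hb (Fin.ext (by simp [hz, hb0]))
        simp [this]
      · simp
    · simp [hi]
  set x : ℝ := u z with hx
  set y : ℝ := s / q with hy
  have hsy : s = q * y := by rw [hy]; field_simp
  have hyall : ∀ i : Fin M, (i:ℕ) ≠ 0 → u i = y := by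
    intro i hi
    have h := hrow i
    simp only [ha, hi, if_neg hi, if_false, one_mul, add_zero] at h
    rw [hy, h, mul_comm, mul_div_assoc, div_self hq, mul_one]
  have hsum : s = t⁻¹ * x + ((M:ℝ)-1) * y := by
    rw [hs, ← Finset.add_sum_erase _ _ (Finset.mem_univ z)]
    have h1 : a z * u z = t⁻¹ * x := by simp [ha, hz, hx]
    have h2 : ∑ j ∈ Finset.univ.erase z, a j * u j = ((M:ℝ)-1) * y := by
      have hc : ∀ j ∈ Finset.univ.erase z, a j * u j = y := by
        intro j hj
        have hj0 : (j:ℕ) ≠ 0 := fun h0 => (Finset.mem_erase.mp hj).1 (Fin.ext (by simp [hz, h0]))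
        simp [ha, hj0, hyall j hj0]
      rw [Finset.sum_congr rfl hc, Finset.sum_const,
        Finset.card_erase_of_mem (Finset.mem_univ z), Finset.card_univ, Fintype.card_fin,
        nsmul_eq_mul, Nat.cast_sub (by omega)]
      norm_num
    rw [h1, h2]
  have e1 : x / t + ((M:ℝ)-1) * y = q * y := by
    rw [← hsy, hsum, div_eq_inv_mul]
  have hz0 := hrow z
  simp only [ha, hz, if_true] at hz0
  -- hz0 : t⁻¹ * s + lam * (1 - 1/r) * u ⟨0,_⟩ = q * u ⟨0,_⟩
  have hz0' : t⁻¹ * s + lam * (1 - 1/r) * x = q * x := hz0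
  have e2 : x / r + ((M:ℝ)-1) * y / t + lam * (1 - 1/r) * x = q * x := by
    rw [← hz0', hsum]
    have : t⁻¹ * (t⁻¹ * x + ((M:ℝ)-1) * y) = x / r + ((M:ℝ)-1)*y/t := by
      rw [← ht2]; field_simp
    rw [this]
  have hyne : y ≠ 0 := by
    intro hy0
    have hx0 : x = 0 := by
      have := e1
      rw [hy0] at this
      field_simp at this
      linarith [this]
    apply hu
    funext i
    rcases eq_or_ne (i:ℕ) 0 with hi | hi
    · have : i = z := Fin.ext (by simp [hz, hi])
      rw [this]; exact hx0
    · rw [hyall i hi, hy0]; rfl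
  have hxeq : x = (q - ((M:ℝ)-1)) * y * t := by
    have h := e1
    field_simp at h
    linarith
  have e3 : r * s + lam * (r-1) * (x * t) = q * x * (r * t) := by
    have h := hz0'
    field_simp at h
    linear_combination h
  rw [hsy, hxeq] at e3
  refine ⟨?_, x, y, rfl, hyall, e1, e2⟩
  have key : r * y * (r * q ^ 2 - (((M : ℝ) - 1) * r + (r - 1) * lam + 1) * q +
      lam * ((M : ℝ) - 1) * (r - 1)) = 0 := by
    linear_combination (-1) * e3 + ((lam*(r-1) - q*r) * (q - ((M:ℝ)-1)) * y) * ht2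
  have := mul_ne_zero hrne hyne
  rcases mul_eq_zero.mp key with h | h
  · exact absurd h this
  · linarith [h]
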